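/- Let f: ℝⁿ → ℝ be locally Lipschitz. Then the single-valued map G: ℝⁿ × (0,∞) → ℝⁿ defined by letting G(x, ε) be the (unique) minimal-norm element of the Goldstein ε-subdifferential ∂ᴳ_ε f(x) is a descent-oriented subdifferential for f. -/

import Mathlib

open Filter Topology Set
open scoped RealInnerProductSpace NNReal

noncomputable section

variable {E : Type*} [NormedAddCommGroup E] [InnerProductSpace ℝ E]

/-- The Clarke generalized directional derivative of `f` at `x` in direction `d`. -/
def clarkeDeriv (f : E → ℝ) (x d : E) : ℝ :=
  Filter.limsup (fun p : E × ℝ => (f (p.1 + p.2 • d) - f p.1) / p.2)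
    ((𝓝 x) ×ˢ (𝓝[>] (0 : ℝ)))

/-- The Clarke subdifferential of `f` at `x`. -/
def clarkeSubdiff (f : E → ℝ) (x : E) : Set E :=
  {v | ∀ d : E, ⟪v, d⟫ ≤ clarkeDeriv f x d}

/-- Outer limit of `G x ε` along joint sequences `ε_k ↓ 0` and `x_k → x̄`. -/
def SeqJointLimsup (G : E → ℝ → Set E) (xbar : E) : Set E :=
  {u | ∃ (eps : ℕ → ℝ) (xs : ℕ → E) (vs : ℕ → E),
    (∀ k, 0 < eps k) ∧ Tendsto eps atTop (𝓝 0) ∧ Tendsto xs atTop (𝓝 xbar) ∧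
    (∀ k, vs k ∈ G (xs k) (eps k)) ∧ Tendsto vs atTop (𝓝 u)}

/-- Outer limit `limsup_{x → xbar} S x` of a set-valued map. -/
def SetMapLimsup (S : E → Set E) (xbar : E) : Set E :=
  {u | ∃ (xs : ℕ → E) (vs : ℕ → E),
    Tendsto xs atTop (𝓝 xbar) ∧ (∀ k, vs k ∈ S (xs k)) ∧ Tendsto vs atTop (𝓝 u)}

/-- Outer limit of a family of sets `A ε` as `ε ↓ 0`. -/
def FamilyOuterLimit (A : ℝ → Set E) : Set E :=
  {u | ∃ (eps : ℕ → ℝ) (vs : ℕ → E), (∀ k, 0 < eps k) ∧ Tendsto eps atTop (𝓝 0) ∧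
    (∀ k, vs k ∈ A (eps k)) ∧ Tendsto vs atTop (𝓝 u)}

/-- Inner limit of a family of sets `A ε` as `ε ↓ 0`. -/
def FamilyInnerLimit (A : ℝ → Set E) : Set E :=
  {u | ∀ eps : ℕ → ℝ, (∀ k, 0 < eps k) → Tendsto eps atTop (𝓝 0) →
    ∃ vs : ℕ → E, (∀ᶠ k in atTop, vs k ∈ A (eps k)) ∧ Tendsto vs atTop (𝓝 u)}

/-- Painlevé–Kuratowski convergence of the family `A ε` to the set `B` as `ε ↓ 0`. -/
def PKTendsto (A : ℝ → Set E) (B : Set E) : Prop :=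
  FamilyOuterLimit A ⊆ B ∧ B ⊆ FamilyInnerLimit A

/-- `g` is the minimal-norm element of `S`. -/
def IsMinNormElt (S : Set E) (g : E) : Prop :=
  g ∈ S ∧ ∀ v ∈ S, ‖g‖ ≤ ‖v‖

/-- A descent-oriented subdifferential for `f`:  for each fixed `ε > 0` the map
`x ↦ G x ε` is closed-valued and locally bounded, (G1) the joint outer limit as
`ε ↓ 0`, `x → x̄` is contained in the Clarke subdifferential, and (G2) the sets
`limsup_{x → x̄} G x ε` converge in the Painlevé–Kuratowski sense, as `ε ↓ 0`,
to the singleton consisting of the minimal-norm Clarke subgradient. -/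
structure IsDescentOrientedSubdiff (f : E → ℝ) (G : E → ℝ → Set E) : Prop where
  closedVals : ∀ ε : ℝ, 0 < ε → ∀ x : E, IsClosed (G x ε)
  locBounded : ∀ ε : ℝ, 0 < ε → ∀ x : E,
    ∃ δ > (0 : ℝ), ∃ M : ℝ, ∀ y : E, ‖y - x‖ < δ → ∀ v ∈ G y ε, ‖v‖ ≤ M
  outerClarke : ∀ xbar : E, SeqJointLimsup G xbar ⊆ clarkeSubdiff f xbar
  minNormLimit : ∀ xbar : E, ∃ g : E, IsMinNormElt (clarkeSubdiff f xbar) g ∧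
    PKTendsto (fun ε => SetMapLimsup (fun x => G x ε) xbar) {g}

/-- The Goldstein `ε`-subdifferential of `f` at `x`. -/
def goldsteinSubdiff (f : E → ℝ) (x : E) (ε : ℝ) : Set E :=
  convexHull ℝ (⋃ z ∈ Metric.closedBall x ε, clarkeSubdiff f z)

/-- The set of minimal-norm elements of a set `S`. -/
def minNormSet (S : Set E) : Set E :=
  {v ∈ S | ∀ w ∈ S, ‖v‖ ≤ ‖w‖}

open scoped Pointwise

section hull
theorem mySum_fin_pad {α : Type*} {M : Type*} [AddCommMonoid M] [DecidableEq α]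
    (t : Finset α) (x₀ : α) (m : ℕ) (hlc : t.toList.length ≤ m) (g : α → M) :
    (∑ i : Fin m, if (i : ℕ) < t.toList.length then g (t.toList.getD (i : ℕ) x₀) else 0)
      = ∑ y ∈ t, g y := by
  set l := t.toList with hl
  have hnd : l.Nodup := Finset.nodup_toList t
  rw [Fin.sum_univ_eq_sum_range (fun i => if i < l.length then g (l.getD i x₀) else 0) m]
  rw [← Finset.sum_subset (Finset.range_subset_range.2 hlc)
    (fun i _ hi => if_neg (by simpa using hi))]
  have h1 : ∑ i ∈ Finset.range l.length, (if i < l.length then g (l.getD i x₀) else 0)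
      = ∑ i ∈ Finset.range l.length, g (l.getD i x₀) :=
    Finset.sum_congr rfl fun i hi => if_pos (Finset.mem_range.mp hi)
  rw [h1]
  refine Finset.sum_nbij' (fun i => l.getD i x₀) (fun y => l.idxOf y) ?_ ?_ ?_ ?_ ?_
  · intro a ha
    have h : a < l.length := Finset.mem_range.mp ha
    rw [List.getD_eq_getElem _ _ h]
    exact Finset.mem_toList.mp (List.getElem_mem h)
  · intro y hy
    exact Finset.mem_range.2 (List.idxOf_lt_length_iff.2 (Finset.mem_toList.2 hy))
  · intro a ha
    have h : a < l.length := Finset.mem_range.mp ha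
    rw [List.getD_eq_getElem _ _ h]
    exact List.get_idxOf hnd ⟨a, h⟩
  · intro y hy
    have h : l.idxOf y < l.length := List.idxOf_lt_length_iff.2 (Finset.mem_toList.2 hy)
    rw [List.getD_eq_getElem _ _ h]
    exact List.idxOf_get h
  · intro a _
    rfl

variable {E : Type*} [NormedAddCommGroup E] [NormedSpace ℝ E] [FiniteDimensional ℝ E]

theorem myIsCompact_convexHull {s : Set E} (hs : IsCompact s) :
    IsCompact (convexHull ℝ s) := by
  classical
  rcases s.eq_empty_or_nonempty with rfl | ⟨x₀, hx₀⟩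
  · simp only [convexHull_empty]; exact isCompact_empty
  set m := Module.finrank ℝ E + 1 with hm
  set T : (Fin m → ℝ) × (Fin m → E) → E := fun p => ∑ i, p.1 i • p.2 i with hTdef
  have hT : Continuous T :=
    continuous_finset_sum _ fun i _ =>
      ((continuous_apply i).comp continuous_fst).smul ((continuous_apply i).comp continuous_snd)
  have hK : IsCompact ((stdSimplex ℝ (Fin m)) ×ˢ (Set.pi univ fun _ : Fin m => s)) :=
    (isCompact_stdSimplex (𝕜 := ℝ) (ι := Fin m)).prod (isCompact_univ_pi fun _ => hs)
  have him : T '' ((stdSimplex ℝ (Fin m)) ×ˢ (Set.pi univ fun _ : Fin m => s))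
      = convexHull ℝ s := by
    apply Subset.antisymm
    · rintro - ⟨⟨w, z⟩, ⟨⟨hw0, hw1⟩, hz⟩, rfl⟩
      have : T (w, z) = Finset.univ.centerMass w z :=
        (Finset.centerMass_eq_of_sum_1 _ _ hw1).symm
      rw [this]
      exact Finset.centerMass_mem_convexHull _ (fun i _ => hw0 i) (by rw [hw1]; norm_num)
        (fun i _ => hz i (mem_univ i))
    · intro x hx
      rw [convexHull_eq_union] at hx
      simp only [mem_iUnion] at hx
      obtain ⟨t, hts, hind, hxt⟩ := hx
      have hcard : t.card ≤ m := by
        have h1 := hind.card_le_finrank_succ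
        have h2 : Module.finrank ℝ ↥(vectorSpan ℝ (range ((↑) : ↑t → E))) ≤ Module.finrank ℝ E :=
          Submodule.finrank_le _
        simpa [Fintype.card_coe, hm] using h1.trans (by omega)
      rw [Finset.convexHull_eq] at hxt
      obtain ⟨w, hw0, hw1, hcm⟩ := hxt
      have hxsum : ∑ y ∈ t, w y • y = x := by
        rw [← hcm, Finset.centerMass_eq_of_sum_1 _ _ hw1]; rfl
      set l := t.toList with hl
      have hlen : l.length = t.card := Finset.length_toList t
      have hlc : l.length ≤ m := hlen ▸ hcard
      have hget : ∀ i : ℕ, i < l.length → l.getD i x₀ ∈ t := by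
        intro i h
        rw [List.getD_eq_getElem _ _ h]
        exact Finset.mem_toList.mp (List.getElem_mem h)
      refine ⟨(fun i => if (i : ℕ) < l.length then w (l.getD (i : ℕ) x₀) else 0,
               fun i => l.getD (i : ℕ) x₀), ⟨⟨?_, ?_⟩, ?_⟩, ?_⟩
      · intro i
        dsimp only
        split
        · exact hw0 _ (hget _ (by assumption))
        · exact le_refl 0
      · exact (mySum_fin_pad t x₀ m hlc w).trans hw1
      · intro i _
        dsimp only
        by_cases h : (i : ℕ) < l.length
        · exact hts (hget _ h)
        · rw [List.getD_eq_default _ _ (by omega)]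
          exact hx₀
      · show ∑ i : Fin m, _ = x
        rw [← hxsum, ← mySum_fin_pad t x₀ m hlc (fun y => w y • y)]
        refine Finset.sum_congr rfl fun i _ => ?_
        dsimp only
        rw [← hl]
        by_cases h : (i : ℕ) < l.length
        · rw [if_pos h, if_pos h]
        · rw [if_neg h, if_neg h, zero_smul]
  rw [← him]
  exact hK.image hT

end hull

/-- difference quotient -/
def dq (f : E → ℝ) (d : E) (p : E × ℝ) : ℝ := (f (p.1 + p.2 • d) - f p.1) / p.2

lemma clarkeDeriv_eq (f : E → ℝ) (x d : E) :
    clarkeDeriv f x d = Filter.limsup (dq f d) ((𝓝 x) ×ˢ (𝓝[>] (0 : ℝ))) := rfl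

variable {f : E → ℝ}

lemma eventually_abs_dq_le (hf : LocallyLipschitz f) (z : E) :
    ∃ r > (0:ℝ), ∃ K ≥ (0:ℝ), ∀ z' ∈ Metric.ball z r, ∀ d : E,
      ∀ᶠ p in (𝓝 z') ×ˢ (𝓝[>] (0:ℝ)), |dq f d p| ≤ K * ‖d‖ := by
  obtain ⟨K, t, ht, hlip⟩ := hf z
  obtain ⟨r₀, hr₀, hball⟩ := Metric.mem_nhds_iff.mp ht
  refine ⟨r₀/4, by positivity, K, K.coe_nonneg, ?_⟩
  intro z' hz' d
  have h1 : Metric.ball z' (r₀/4) ×ˢ Ioo (0:ℝ) (r₀/(4*(‖d‖+1)))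
      ∈ (𝓝 z') ×ˢ (𝓝[>] (0:ℝ)) := by
    refine prod_mem_prod (Metric.ball_mem_nhds _ (by positivity)) ?_
    exact Ioo_mem_nhdsGT (by positivity)
  filter_upwards [h1] with p hp
  obtain ⟨hy, hs⟩ := hp
  have hd1 : (0:ℝ) < ‖d‖ + 1 := by positivity
  have hsd : p.2 * ‖d‖ < r₀/4 := by
    calc p.2 * ‖d‖ ≤ p.2 * (‖d‖ + 1) := by nlinarith [hs.1.le, norm_nonneg d]
    _ < r₀/(4*(‖d‖+1)) * (‖d‖+1) := by
        apply mul_lt_mul_of_pos_right hs.2 hd1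
    _ = r₀/4 := by field_simp
  have hyz : dist p.1 z < r₀/2 := by
    have := Metric.mem_ball.mp hy
    have hz'z := Metric.mem_ball.mp hz'
    calc dist p.1 z ≤ dist p.1 z' + dist z' z := dist_triangle _ _ _
    _ < r₀/4 + r₀/4 := by linarith
    _ = r₀/2 := by ring
  have hmem1 : p.1 ∈ t := hball (by simp [Metric.mem_ball]; linarith)
  have hmem2 : p.1 + p.2 • d ∈ t := by
    apply hball
    have : dist (p.1 + p.2 • d) p.1 = p.2 * ‖d‖ := by
      rw [dist_eq_norm, add_sub_cancel_left, norm_smul, Real.norm_eq_abs,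
        abs_of_pos hs.1]
    have h3 : dist (p.1 + p.2 • d) z ≤ dist (p.1 + p.2 • d) p.1 + dist p.1 z :=
      dist_triangle _ _ _
    rw [this] at h3
    simp only [Metric.mem_ball]
    linarith
  have hlipest : |f (p.1 + p.2 • d) - f p.1| ≤ K * (p.2 * ‖d‖) := by
    have := hlip.dist_le_mul _ hmem2 _ hmem1
    rw [Real.dist_eq] at this
    refine this.trans ?_
    apply mul_le_mul_of_nonneg_left _ K.coe_nonneg
    rw [dist_eq_norm, add_sub_cancel_left, norm_smul, Real.norm_eq_abs, abs_of_pos hs.1]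
  have hp2 : (0:ℝ) < p.2 := hs.1
  rw [dq, abs_div, abs_of_pos hp2, div_le_iff₀ hp2]
  calc |f (p.1 + p.2 • d) - f p.1| ≤ K * (p.2 * ‖d‖) := hlipest
  _ = K * ‖d‖ * p.2 := by ring

lemma isBoundedUnder_le_dq (hf : LocallyLipschitz f) (z : E) (d : E) :
    IsBoundedUnder (· ≤ ·) ((𝓝 z) ×ˢ (𝓝[>] (0:ℝ))) (dq f d) := by
  obtain ⟨r, hr, K, hK, H⟩ := eventually_abs_dq_le hf z
  exact ⟨K * ‖d‖, by
    rw [eventually_map]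
    exact (H z (Metric.mem_ball_self hr) d).mono fun p hp => (abs_le.mp hp).2⟩

lemma isBoundedUnder_ge_dq (hf : LocallyLipschitz f) (z : E) (d : E) :
    IsBoundedUnder (· ≥ ·) ((𝓝 z) ×ˢ (𝓝[>] (0:ℝ))) (dq f d) := by
  obtain ⟨r, hr, K, hK, H⟩ := eventually_abs_dq_le hf z
  exact ⟨-(K * ‖d‖), by
    rw [eventually_map]
    exact (H z (Metric.mem_ball_self hr) d).mono fun p hp => (abs_le.mp hp).1⟩

lemma clarke_bound (hf : LocallyLipschitz f) (z : E) :
    ∃ r > (0:ℝ), ∃ K ≥ (0:ℝ), ∀ z' ∈ Metric.ball z r,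
      (∀ d : E, clarkeDeriv f z' d ≤ K * ‖d‖) ∧
      (∀ v ∈ clarkeSubdiff f z', ‖v‖ ≤ K) := by
  obtain ⟨r, hr, K, hK, H⟩ := eventually_abs_dq_le hf z
  refine ⟨r, hr, K, hK, fun z' hz' => ⟨fun d => ?_, fun v hv => ?_⟩⟩
  · rw [clarkeDeriv_eq]
    refine limsup_le_of_le (isBoundedUnder_ge_dq hf z' d).isCoboundedUnder_le ?_
    exact (H z' hz' d).mono fun p hp => (abs_le.mp hp).2
  · have h1 : ⟪v, v⟫ ≤ clarkeDeriv f z' v := hv v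
    have h2 : clarkeDeriv f z' v ≤ K * ‖v‖ := by
      rw [clarkeDeriv_eq]
      refine limsup_le_of_le (isBoundedUnder_ge_dq hf z' v).isCoboundedUnder_le ?_
      exact (H z' hz' v).mono fun p hp => (abs_le.mp hp).2
    rw [real_inner_self_eq_norm_mul_norm] at h1
    rcases eq_or_lt_of_le (norm_nonneg v) with h | h
    · rw [← h]; exact hK
    · have := h1.trans h2
      exact le_of_mul_le_mul_right (by linarith) h

lemma tendsto_snd_mul_const {c : ℝ} (hc : 0 < c) :
    Tendsto (fun t : ℝ => t * c) (𝓝[>] (0:ℝ)) (𝓝[>] (0:ℝ)) := by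
  have h2 : Tendsto (fun t : ℝ => t * c) (𝓝[>] (0:ℝ)) (𝓝 (0:ℝ)) := by
    have h3 : Tendsto (fun t : ℝ => t * c) (𝓝 (0:ℝ)) (𝓝 (0*c)) := tendsto_id.mul_const c
    rw [zero_mul] at h3
    exact h3.mono_left nhdsWithin_le_nhds
  apply tendsto_nhdsWithin_of_tendsto_nhds_of_eventually_within _ h2
  filter_upwards [self_mem_nhdsWithin] with t ht
  exact mul_pos ht hc

lemma tendsto_prod_mul_const {x : E} {c : ℝ} (hc : 0 < c) :
    Tendsto (fun p : E × ℝ => (p.1, p.2 * c)) ((𝓝 x) ×ˢ (𝓝[>] (0:ℝ)))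
      ((𝓝 x) ×ˢ (𝓝[>] (0:ℝ))) :=
  Tendsto.prodMk tendsto_fst ((tendsto_snd_mul_const hc).comp tendsto_snd)

lemma clarkeDeriv_zero_dir (f : E → ℝ) (x : E) : clarkeDeriv f x 0 = 0 := by
  rw [clarkeDeriv_eq]
  have : dq f (0:E) = fun _ : E × ℝ => (0:ℝ) := by
    funext p; simp [dq]
  rw [this]
  exact limsup_const 0

lemma clarkeDeriv_smul (f : E → ℝ) (x : E) {c : ℝ} (hc : 0 < c) (d : E) :
    clarkeDeriv f x (c • d) = c * clarkeDeriv f x d := by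
  rw [clarkeDeriv_eq, clarkeDeriv_eq, limsup_eq, limsup_eq]
  have hc' : c ≠ 0 := ne_of_gt hc
  have key : ∀ a : ℝ,
      (∀ᶠ p in (𝓝 x) ×ˢ (𝓝[>] (0:ℝ)), dq f (c • d) p ≤ a) ↔
      (∀ᶠ p in (𝓝 x) ×ˢ (𝓝[>] (0:ℝ)), dq f d p ≤ a / c) := by
    intro a
    constructor
    · intro h
      have hm := tendsto_prod_mul_const (x := x) (inv_pos.mpr hc)
      filter_upwards [hm.eventually h, (prod_mem_prod univ_mem self_mem_nhdsWithin :
        (univ : Set E) ×ˢ Ioi (0:ℝ) ∈ (𝓝 x) ×ˢ (𝓝[>] (0:ℝ)))] with p hp hpos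
      have hp2 : (0:ℝ) < p.2 := hpos.2
      have heq : dq f (c • d) (p.1, p.2 * c⁻¹) = c * dq f d p := by
        simp only [dq]
        rw [smul_smul, mul_assoc, inv_mul_cancel₀ hc', mul_one]
        field_simp
      rw [heq] at hp
      calc dq f d p = (c * dq f d p) / c := by field_simp
      _ ≤ a / c := by gcongr
    · intro h
      have hm := tendsto_prod_mul_const (x := x) hc
      filter_upwards [hm.eventually h, (prod_mem_prod univ_mem self_mem_nhdsWithin :
        (univ : Set E) ×ˢ Ioi (0:ℝ) ∈ (𝓝 x) ×ˢ (𝓝[>] (0:ℝ)))] with p hp hpos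
      have hp2 : (0:ℝ) < p.2 := hpos.2
      have heq : dq f d (p.1, p.2 * c) = dq f (c • d) p / c := by
        simp only [dq, smul_smul]
        rw [mul_comm p.2 c, div_div]
        ring_nf
      rw [heq] at hp
      calc dq f (c • d) p = (dq f (c • d) p / c) * c := by field_simp
      _ ≤ (a / c) * c := mul_le_mul_of_nonneg_right hp hc.le
      _ = a := by field_simp
  have hset : {a : ℝ | ∀ᶠ p in (𝓝 x) ×ˢ (𝓝[>] (0:ℝ)), dq f (c • d) p ≤ a}
      = c • {a : ℝ | ∀ᶠ p in (𝓝 x) ×ˢ (𝓝[>] (0:ℝ)), dq f d p ≤ a} := by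
    ext a
    rw [Set.mem_smul_set_iff_inv_smul_mem₀ hc', mem_setOf_eq, mem_setOf_eq, key a]
    simp only [smul_eq_mul]
    rw [div_eq_inv_mul]
  rw [hset, Real.sInf_smul_of_nonneg hc.le, smul_eq_mul]

lemma clarkeDeriv_add_le (hf : LocallyLipschitz f) (x : E) (d₁ d₂ : E) :
    clarkeDeriv f x (d₁ + d₂) ≤ clarkeDeriv f x d₁ + clarkeDeriv f x d₂ := by
  set F := (𝓝 x) ×ˢ (𝓝[>] (0:ℝ)) with hF
  set m : E × ℝ → E × ℝ := fun p => (p.1 + p.2 • d₁, p.2) with hmdef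
  have hm : Tendsto m F F := by
    refine Tendsto.prodMk ?_ tendsto_snd
    have h1 : Tendsto (fun p : E × ℝ => p.2 • d₁) F (𝓝 ((0:ℝ) • d₁)) :=
      ((tendsto_snd.mono_right nhdsWithin_le_nhds).smul_const d₁)
    rw [zero_smul] at h1
    have := Tendsto.add (tendsto_fst (f := 𝓝 x) (g := 𝓝[>] (0:ℝ))) h1
    rw [add_zero] at this
    exact this
  have heq : dq f (d₁ + d₂) = dq f d₁ + (dq f d₂ ∘ m) := by
    funext p
    simp only [dq, Pi.add_apply, Function.comp_apply, hmdef, smul_add]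
    rw [← add_div]
    congr 1
    rw [← add_assoc]
    ring
  obtain ⟨r, hr, K, hK, H⟩ := eventually_abs_dq_le hf x
  have hev1 := H x (Metric.mem_ball_self hr) d₁
  have hev2 := H x (Metric.mem_ball_self hr) d₂
  have hev2m : ∀ᶠ p in F, |dq f d₂ (m p)| ≤ K * ‖d₂‖ := hm.eventually hev2
  have hb1le : IsBoundedUnder (· ≤ ·) F (dq f d₁) :=
    ⟨K * ‖d₁‖, eventually_map.mpr (hev1.mono fun p hp => (abs_le.mp hp).2)⟩
  have hb1ge : IsBoundedUnder (· ≥ ·) F (dq f d₁) :=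
    ⟨-(K * ‖d₁‖), eventually_map.mpr (hev1.mono fun p hp => (abs_le.mp hp).1)⟩
  have hb2le : IsBoundedUnder (· ≤ ·) F (dq f d₂ ∘ m) :=
    ⟨K * ‖d₂‖, eventually_map.mpr (hev2m.mono fun p hp => (abs_le.mp hp).2)⟩
  have hb2ge : IsBoundedUnder (· ≥ ·) F (dq f d₂ ∘ m) :=
    ⟨-(K * ‖d₂‖), eventually_map.mpr (hev2m.mono fun p hp => (abs_le.mp hp).1)⟩
  calc clarkeDeriv f x (d₁ + d₂) = limsup (dq f d₁ + (dq f d₂ ∘ m)) F := by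
        rw [clarkeDeriv_eq, heq]
  _ ≤ limsup (dq f d₁) F + limsup (dq f d₂ ∘ m) F :=
      limsup_add_le hb1ge hb1le hb2ge.isCoboundedUnder_le hb2le
  _ ≤ clarkeDeriv f x d₁ + clarkeDeriv f x d₂ := by
      refine add_le_add le_rfl ?_
      rw [clarkeDeriv_eq]
      rw [limsup_comp (dq f d₂) m F]
      refine limsup_le_limsup_of_le hm ?_ ?_
      · show IsCobounded _ (map (dq f d₂) (map m F))
        rw [Filter.map_map]
        exact hb2ge.isCoboundedUnder_le
      · exact isBoundedUnder_le_dq hf x d₂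

lemma clarkeSubdiff_convex (f : E → ℝ) (x : E) : Convex ℝ (clarkeSubdiff f x) := by
  intro v₁ h₁ v₂ h₂ a b ha hb hab
  intro d
  have e1 := h₁ d
  have e2 := h₂ d
  have : ⟪a • v₁ + b • v₂, d⟫ = a * ⟪v₁, d⟫ + b * ⟪v₂, d⟫ := by
    rw [inner_add_left, real_inner_smul_left, real_inner_smul_left]
  rw [this]
  calc a * ⟪v₁, d⟫ + b * ⟪v₂, d⟫
      ≤ a * clarkeDeriv f x d + b * clarkeDeriv f x d :=
        add_le_add (mul_le_mul_of_nonneg_left e1 ha) (mul_le_mul_of_nonneg_left e2 hb)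
  _ = clarkeDeriv f x d := by rw [← add_mul, hab, one_mul]

lemma clarkeSubdiff_isClosed (f : E → ℝ) (x : E) : IsClosed (clarkeSubdiff f x) := by
  have : clarkeSubdiff f x = ⋂ d : E, {v : E | ⟪v, d⟫ ≤ clarkeDeriv f x d} := by
    ext v; simp [clarkeSubdiff, mem_iInter]
  rw [this]
  exact isClosed_iInter fun d =>
    isClosed_le (Continuous.inner continuous_id continuous_const) continuous_const

lemma clarkeSubdiff_nonempty [FiniteDimensional ℝ E] (hf : LocallyLipschitz f) (x : E) :
    (clarkeSubdiff f x).Nonempty := by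
  obtain ⟨g, -, hg2⟩ := exists_extension_of_le_sublinear ((0 : E →ₗ[ℝ] ℝ).toPMap ⊥)
    (clarkeDeriv f x)
    (fun c hc d => clarkeDeriv_smul f x hc d)
    (clarkeDeriv_add_le hf x)
    (by
      rintro ⟨y, hy⟩
      rcases Submodule.mem_bot (R := ℝ) |>.mp hy with rfl
      simp only [LinearMap.toPMap_apply, LinearMap.zero_apply]
      rw [clarkeDeriv_zero_dir f x]
      exact (LinearPMap.map_zero _).le)
  let g' : E →L[ℝ] ℝ := LinearMap.toContinuousLinearMap g
  refine ⟨(InnerProductSpace.toDual ℝ E).symm g', fun d => ?_⟩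
  rw [InnerProductSpace.toDual_symm_apply]
  exact hg2 d

lemma goldstein_outer (hf : LocallyLipschitz f) {xbar u : E} {eps : ℕ → ℝ} {xs vs : ℕ → E}
    (heps0 : ∀ k, 0 ≤ eps k) (hepsto : Tendsto eps atTop (𝓝 0))
    (hxs : Tendsto xs atTop (𝓝 xbar))
    (hvs : ∀ k, vs k ∈ goldsteinSubdiff f (xs k) (eps k))
    (hu : Tendsto vs atTop (𝓝 u)) :
    u ∈ clarkeSubdiff f xbar := by
  intro d
  rw [clarkeDeriv_eq, limsup_eq]
  obtain ⟨r, hr, K, hK, H⟩ := eventually_abs_dq_le hf xbar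
  refine le_csInf ⟨K * ‖d‖, (H xbar (Metric.mem_ball_self hr) d).mono
    fun p hp => (abs_le.mp hp).2⟩ ?_
  intro a ha
  rw [mem_setOf_eq, eventually_prod_iff] at ha
  obtain ⟨pa, hpa, pb, hpb, hcond⟩ := ha
  obtain ⟨δ₁, hδ₁, hball⟩ := Metric.mem_nhds_iff.mp hpa
  obtain ⟨δ₂, hδ₂, hIoo⟩ := mem_nhdsGT_iff_exists_Ioo_subset.mp hpb
  rw [mem_Ioi] at hδ₂
  set δ := min δ₁ δ₂ with hδdef
  have hδ : 0 < δ := lt_min hδ₁ hδ₂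
  have step : ∀ z : E, dist z xbar < δ/2 → ∀ w ∈ clarkeSubdiff f z, ⟪w, d⟫ ≤ a := by
    intro z hz w hw
    have hcd : clarkeDeriv f z d ≤ a := by
      rw [clarkeDeriv_eq]
      refine limsup_le_of_le (isBoundedUnder_ge_dq hf z d).isCoboundedUnder_le ?_
      have hmem : Metric.ball z (δ/2) ×ˢ Ioo (0:ℝ) δ₂ ∈ (𝓝 z) ×ˢ (𝓝[>] (0:ℝ)) :=
        prod_mem_prod (Metric.ball_mem_nhds _ (by positivity))
          (Ioo_mem_nhdsGT hδ₂)
      filter_upwards [hmem] with p hp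
      have hp1 : pa p.1 := by
        apply hball
        have := Metric.mem_ball.mp hp.1
        have h2 : dist p.1 xbar ≤ dist p.1 z + dist z xbar := dist_triangle _ _ _
        have h3 : δ ≤ δ₁ := min_le_left _ _
        simp only [Metric.mem_ball]
        linarith
      have hp2 : pb p.2 := hIoo hp.2
      exact hcond hp1 hp2
    exact (hw d).trans hcd
  have hev : ∀ᶠ k in atTop, ⟪vs k, d⟫ ≤ a := by
    have h1 : ∀ᶠ k in atTop, dist (xs k) xbar < δ/4 :=
      hxs.eventually (Metric.ball_mem_nhds xbar (by positivity))
    have h2 : ∀ᶠ k in atTop, |eps k| < δ/4 := by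
      have := hepsto.eventually (Metric.ball_mem_nhds (0:ℝ) (show (0:ℝ) < δ/4 by positivity))
      exact this.mono fun k hk => by simpa [Real.dist_eq] using hk
    filter_upwards [h1, h2] with k hk1 hk2
    have hC : Convex ℝ {w : E | ⟪w, d⟫ ≤ a} := by
      apply convex_halfSpace_le
      exact ⟨fun v w => inner_add_left v w d, fun c v => real_inner_smul_left v d c⟩
    have hsub : (⋃ z ∈ Metric.closedBall (xs k) (eps k), clarkeSubdiff f z)
        ⊆ {w : E | ⟪w, d⟫ ≤ a} := by
      intro w hw
      rw [mem_iUnion₂] at hw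
      obtain ⟨z, hz, hwz⟩ := hw
      have hzx : dist z xbar < δ/2 := by
        have h3 : dist z (xs k) ≤ eps k := Metric.mem_closedBall.mp hz
        have h4 : dist z xbar ≤ dist z (xs k) + dist (xs k) xbar := dist_triangle _ _ _
        have h5 : eps k < δ/4 := (le_abs_self _).trans_lt hk2
        linarith
      exact step z hzx w hwz
    exact convexHull_min hsub hC (hvs k)
  exact le_of_tendsto (hu.inner (tendsto_const_nhds (x := d))) hev

lemma clarke_seq_closed (hf : LocallyLipschitz f) {zs ws : ℕ → E} {z w : E}
    (hz : Tendsto zs atTop (𝓝 z)) (hw : ∀ k, ws k ∈ clarkeSubdiff f (zs k))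
    (hwt : Tendsto ws atTop (𝓝 w)) : w ∈ clarkeSubdiff f z :=
  goldstein_outer hf (eps := fun _ => 0) (fun _ => le_rfl) tendsto_const_nhds hz
    (fun k => subset_convexHull ℝ _
      (mem_iUnion₂.2 ⟨zs k, Metric.mem_closedBall_self le_rfl, hw k⟩)) hwt

section FD
variable [FiniteDimensional ℝ E]

lemma clarke_bound_compact (hf : LocallyLipschitz f) (x : E) (R : ℝ) :
    ∃ K ≥ (0:ℝ), ∀ z ∈ Metric.closedBall x R, ∀ v ∈ clarkeSubdiff f z, ‖v‖ ≤ K := by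
  choose r hr K hK H using fun z : E => clarke_bound hf z
  obtain ⟨t, ht⟩ := (isCompact_closedBall x R).elim_finite_subcover
    (fun z : E => Metric.ball z (r z)) (fun z => Metric.isOpen_ball)
    (fun z hz => mem_iUnion.2 ⟨z, Metric.mem_ball_self (hr z)⟩)
  refine ⟨∑ z ∈ t, K z, Finset.sum_nonneg fun z _ => hK z, ?_⟩
  intro z hz v hv
  obtain ⟨z₀, hz₀t, hzz₀⟩ := mem_iUnion₂.mp (ht hz)
  calc ‖v‖ ≤ K z₀ := (H z₀ z hzz₀).2 v hv
  _ ≤ ∑ z ∈ t, K z := Finset.single_le_sum (fun i _ => hK i) hz₀t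

lemma goldstein_bound (hf : LocallyLipschitz f) (x : E) (ε : ℝ) :
    ∃ K ≥ (0:ℝ), goldsteinSubdiff f x ε ⊆ Metric.closedBall 0 K := by
  obtain ⟨K, hK, H⟩ := clarke_bound_compact hf x ε
  refine ⟨K, hK, convexHull_min ?_ (convex_closedBall 0 K)⟩
  intro w hw
  obtain ⟨z, hz, hwz⟩ := mem_iUnion₂.mp hw
  exact mem_closedBall_zero_iff.2 (H z hz w hwz)

lemma goldstein_isCompact (hf : LocallyLipschitz f) (x : E) (ε : ℝ) :
    IsCompact (goldsteinSubdiff f x ε) := by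
  apply myIsCompact_convexHull
  have hbdd : Bornology.IsBounded (⋃ z ∈ Metric.closedBall x ε, clarkeSubdiff f z) := by
    obtain ⟨K, hK, H⟩ := clarke_bound_compact hf x ε
    apply Bornology.IsBounded.subset (Metric.isBounded_closedBall (x := (0:E)) (r := K))
    intro w hw
    obtain ⟨z, hz, hwz⟩ := mem_iUnion₂.mp hw
    exact mem_closedBall_zero_iff.2 (H z hz w hwz)
  have hclosed : IsClosed (⋃ z ∈ Metric.closedBall x ε, clarkeSubdiff f z) := by
    apply IsSeqClosed.isClosed
    intro ws w hmem hwt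
    have hsel : ∀ k, ∃ z ∈ Metric.closedBall x ε, ws k ∈ clarkeSubdiff f z := by
      intro k
      obtain ⟨z, hz, hwz⟩ := mem_iUnion₂.mp (hmem k)
      exact ⟨z, hz, hwz⟩
    choose zs hzs hwzs using hsel
    obtain ⟨z, hzmem, φ, hφ, hφt⟩ := (isCompact_closedBall x ε).tendsto_subseq hzs
    have hwmem : w ∈ clarkeSubdiff f z :=
      clarke_seq_closed hf hφt (fun k => hwzs (φ k)) (hwt.comp hφ.tendsto_atTop)
    exact mem_iUnion₂.2 ⟨z, hzmem, hwmem⟩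
  exact Metric.isCompact_of_isClosed_isBounded hclosed hbdd

end FD

lemma minNormSet_subsingleton {S : Set E} (hconv : Convex ℝ S) :
    ∀ u ∈ minNormSet S, ∀ v ∈ minNormSet S, u = v := by
  rintro u ⟨huS, humin⟩ v ⟨hvS, hvmin⟩
  have hn : ‖u‖ = ‖v‖ := le_antisymm (humin v hvS) (hvmin u huS)
  have hmid : (1/2 : ℝ) • u + (1/2 : ℝ) • v ∈ S :=
    hconv huS hvS (by norm_num) (by norm_num) (by norm_num)
  have hm : ‖u‖ ≤ ‖(1/2 : ℝ) • u + (1/2 : ℝ) • v‖ := humin _ hmid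
  have hmid2 : ‖(1/2 : ℝ) • u + (1/2 : ℝ) • v‖ = (1/2 : ℝ) * ‖u + v‖ := by
    rw [← smul_add, norm_smul]
    norm_num
  have hpar := parallelogram_law_with_norm ℝ u v
  have hm' : ‖u‖ ≤ 1/2 * ‖u + v‖ := hmid2 ▸ hm
  have h4 : ‖u - v‖ * ‖u - v‖ ≤ 0 := by
    nlinarith [norm_nonneg u, norm_nonneg (u + v), mul_self_nonneg (‖u + v‖ - 2 * ‖u‖)]
  have hz : ‖u - v‖ = 0 := le_antisymm (by nlinarith [norm_nonneg (u - v)]) (norm_nonneg _)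
  have := norm_eq_zero.mp hz
  exact sub_eq_zero.mp this

lemma minNorm_exists_unique {S : Set E} (hconv : Convex ℝ S) (hcomp : IsCompact S)
    (hne : S.Nonempty) : ∃! v : E, v ∈ minNormSet S := by
  obtain ⟨v, hvS, hmin⟩ := hcomp.exists_isMinOn hne continuous_norm.continuousOn
  refine ⟨v, ⟨hvS, fun w hw => hmin hw⟩, fun u hu => minNormSet_subsingleton hconv u hu v
    ⟨hvS, fun w hw => hmin hw⟩⟩

section Main
variable [FiniteDimensional ℝ E]

theorem goldstein_main (f : E → ℝ) (hf : LocallyLipschitz f) :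
    (∀ (x : E) (ε : ℝ), 0 < ε →
      ∃! v : E, v ∈ minNormSet (goldsteinSubdiff f x ε)) ∧
    IsDescentOrientedSubdiff f (fun x ε => minNormSet (goldsteinSubdiff f x ε)) := by
  have hEU : ∀ (x : E) (ε : ℝ), 0 ≤ ε →
      ∃! v : E, v ∈ minNormSet (goldsteinSubdiff f x ε) := by
    intro x ε hε
    obtain ⟨v, hv⟩ := clarkeSubdiff_nonempty hf x
    exact minNorm_exists_unique (convex_convexHull ℝ _) (goldstein_isCompact hf x ε)
      ⟨v, subset_convexHull ℝ _ (mem_iUnion₂.2 ⟨x, Metric.mem_closedBall_self hε, hv⟩)⟩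
  refine ⟨fun x ε hε => hEU x ε hε.le, ?_, ?_, ?_, ?_⟩
  · -- closedVals
    intro ε hε x
    obtain ⟨v, hv, huniq⟩ := hEU x ε hε.le
    have : minNormSet (goldsteinSubdiff f x ε) = {v} :=
      Set.eq_singleton_iff_unique_mem.mpr ⟨hv, huniq⟩
    rw [this]
    exact isClosed_singleton
  · -- locBounded
    intro ε hε x
    obtain ⟨K, hK, H⟩ := clarke_bound_compact hf x (ε + 1)
    refine ⟨1, one_pos, K, ?_⟩
    intro y hy v hv
    have hvG : v ∈ goldsteinSubdiff f y ε := hv.1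
    have hsub : goldsteinSubdiff f y ε ⊆ Metric.closedBall 0 K := by
      refine convexHull_min ?_ (convex_closedBall 0 K)
      intro w hw
      obtain ⟨z, hz, hwz⟩ := mem_iUnion₂.mp hw
      have hzx : z ∈ Metric.closedBall x (ε + 1) := by
        have h1 : dist z y ≤ ε := Metric.mem_closedBall.mp hz
        have h2 : dist y x < 1 := by rwa [dist_eq_norm]
        have h3 : dist z x ≤ dist z y + dist y x := dist_triangle _ _ _
        simp only [Metric.mem_closedBall]
        linarith
      exact mem_closedBall_zero_iff.2 (H z hzx w hwz)
    exact mem_closedBall_zero_iff.mp (hsub hvG)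
  · -- outerClarke
    intro xbar u hu
    obtain ⟨eps, xs, vs, heps, hepsto, hxs, hvs, hvt⟩ := hu
    exact goldstein_outer hf (fun k => (heps k).le) hepsto hxs (fun k => (hvs k).1) hvt
  · -- minNormLimit
    intro xbar
    have hCclosed := clarkeSubdiff_isClosed f xbar
    have hCbdd : Bornology.IsBounded (clarkeSubdiff f xbar) := by
      obtain ⟨K, hK, H⟩ := clarke_bound_compact hf xbar 0
      apply Bornology.IsBounded.subset (Metric.isBounded_closedBall (x := (0:E)) (r := K))
      intro w hw
      exact mem_closedBall_zero_iff.2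
        (H xbar (Metric.mem_closedBall_self le_rfl) w hw)
    have hCcomp : IsCompact (clarkeSubdiff f xbar) :=
      Metric.isCompact_of_isClosed_isBounded hCclosed hCbdd
    obtain ⟨g, hg, hguniq⟩ := minNorm_exists_unique (clarkeSubdiff_convex f xbar) hCcomp
      (clarkeSubdiff_nonempty hf xbar)
    refine ⟨g, ⟨hg.1, hg.2⟩, ?_, ?_⟩
    · -- outer limit ⊆ {g}
      intro u hu
      obtain ⟨eps, vs, heps, hepsto, hvs, hvt⟩ := hu
      have hsel : ∀ k : ℕ, ∃ x' w' : E, dist x' xbar ≤ min (eps k) (1/(k+1)) ∧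
          dist w' (vs k) ≤ 1/(k+1) ∧ w' ∈ minNormSet (goldsteinSubdiff f x' (eps k)) := by
        intro k
        obtain ⟨xs, ws, hxst, hwsmem, hwst⟩ := hvs k
        have hrad : (0:ℝ) < min (eps k) (1/(k+1)) := lt_min (heps k) (by positivity)
        have h1 : ∀ᶠ j in atTop, dist (xs j) xbar ≤ min (eps k) (1/(k+1)) :=
          (hxst.eventually (Metric.ball_mem_nhds xbar hrad)).mono
            fun j hj => (Metric.mem_ball.mp hj).le
        have h2 : ∀ᶠ j in atTop, dist (ws j) (vs k) ≤ 1/(k+1) :=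
          (hwst.eventually (Metric.ball_mem_nhds (vs k) (by positivity : (0:ℝ) < 1/(k+1)))).mono
            fun j hj => (Metric.mem_ball.mp hj).le
        obtain ⟨j, hj1, hj2⟩ := (h1.and h2).exists
        exact ⟨xs j, ws j, hj1, hj2, hwsmem j⟩
      choose x' w' hx' hw' hmem using hsel
      have hone : Tendsto (fun k : ℕ => 1/((k:ℝ)+1)) atTop (𝓝 0) :=
        tendsto_one_div_add_atTop_nhds_zero_nat
      have hxt : Tendsto x' atTop (𝓝 xbar) := by
        rw [tendsto_iff_dist_tendsto_zero]
        refine squeeze_zero (fun k => dist_nonneg) (fun k => (hx' k).trans (min_le_right _ _))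
          hone
      have hwt : Tendsto w' atTop (𝓝 u) := by
        rw [tendsto_iff_dist_tendsto_zero]
        refine squeeze_zero (fun k => dist_nonneg)
          (fun k => (dist_triangle (w' k) (vs k) u).trans
            (add_le_add_left (hw' k) _)) ?_
        have := hone.add (tendsto_iff_dist_tendsto_zero.mp hvt)
        simpa using this
      have huC : u ∈ clarkeSubdiff f xbar :=
        goldstein_outer hf (fun k => (heps k).le) hepsto hxt (fun k => (hmem k).1) hwt
      have hnu : ‖u‖ ≤ ‖g‖ := by
        have hb : ∀ k, ‖w' k‖ ≤ ‖g‖ := by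
          intro k
          have hxbar : xbar ∈ Metric.closedBall (x' k) (eps k) := by
            rw [Metric.mem_closedBall, dist_comm]
            exact (hx' k).trans (min_le_left _ _)
          exact (hmem k).2 g (subset_convexHull ℝ _ (mem_iUnion₂.2 ⟨xbar, hxbar, hg.1⟩))
        exact le_of_tendsto hwt.norm (Eventually.of_forall hb)
      exact hguniq u ⟨huC, fun w hw => hnu.trans (hg.2 w hw)⟩
    · -- {g} ⊆ inner limit
      intro v hv
      rw [mem_singleton_iff.mp hv]
      intro eps heps hepsto
      have hch := fun k => hEU xbar (eps k) (heps k).le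
      choose vs hvsmem hvsuniq using hch
      have hgmem : ∀ k, g ∈ goldsteinSubdiff f xbar (eps k) := fun k =>
        subset_convexHull ℝ _
          (mem_iUnion₂.2 ⟨xbar, Metric.mem_closedBall_self (heps k).le, hg.1⟩)
      have hb : ∀ k, ‖vs k‖ ≤ ‖g‖ := fun k => (hvsmem k).2 g (hgmem k)
      refine ⟨vs, Eventually.of_forall (fun k =>
        ⟨fun _ => xbar, fun _ => vs k, tendsto_const_nhds, fun _ => hvsmem k,
          tendsto_const_nhds⟩), ?_⟩
      apply tendsto_of_subseq_tendsto
      intro ns hns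
      obtain ⟨a, ha, φ, hφ, hat⟩ := tendsto_subseq_of_bounded
        (Metric.isBounded_closedBall (x := (0:E)) (r := ‖g‖))
        (fun j => mem_closedBall_zero_iff.2 (hb (ns j)))
      refine ⟨φ, ?_⟩
      have haC : a ∈ clarkeSubdiff f xbar := by
        refine goldstein_outer hf (eps := fun j => eps (ns (φ j)))
          (fun j => (heps _).le) (hepsto.comp (hns.comp hφ.tendsto_atTop))
          tendsto_const_nhds (fun j => (hvsmem _).1) hat
      have hna : ‖a‖ ≤ ‖g‖ := by
        have : a ∈ Metric.closedBall (0:E) ‖g‖ := by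
          rwa [Metric.isClosed_closedBall.closure_eq] at ha
        exact mem_closedBall_zero_iff.mp this
      have hag : a = g := hguniq a ⟨haC, fun w hw => hna.trans (hg.2 w hw)⟩
      rw [hag] at hat
      exact hat

end Main

/-- for locally Lipschitz `f`, the map sending `(x, ε)` to the
(unique) minimal-norm element of the Goldstein `ε`-subdifferential is a
descent-oriented subdifferential for `f`. -/
theorem goldstein_minNorm_descentOriented {n : ℕ}
    (f : EuclideanSpace ℝ (Fin n) → ℝ) (hf : LocallyLipschitz f) :
    (∀ (x : EuclideanSpace ℝ (Fin n)) (ε : ℝ), 0 < ε →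
      ∃! v : EuclideanSpace ℝ (Fin n), v ∈ minNormSet (goldsteinSubdiff f x ε)) ∧
    IsDescentOrientedSubdiff f (fun x ε => minNormSet (goldsteinSubdiff f x ε)) := by
  exact goldstein_main f hf

end
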